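/- For s ∈ R and triadic cubes Q_n = {x ∈ Z^d : |x|_∞ < 3^n/2}, define μ_n(s) = (#Q_n)^{-1} sup_{u ∈ S_n(s)} |∂u(Q_n)| where S_n(s) = {u : Q̄_n → R : L_ω u(x) ≤ s + ψ_ω(x) - E_Q[ψ] for all x ∈ Q_n}. Then for all m,n ∈ N, μ_{m+n} ≤ (#Q_n)^{-1} Σ_{i=1}^{#Q_n} μ_m^{(i)}, where {Q_m^i : 1 ≤ i ≤ #Q_n} are the disjoint m-level triadic sub-cubes of Q_{m+n} and μ_m^{(i)} = (#Q_m)^{-1} sup_{u ∈ S(s;Q_m^i)} |∂u(Q_m^i)|. -/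

import Mathlib

open MeasureTheory Finset
open scoped Classical ENNReal

/-- Two lattice points are nearest neighbors. -/
def latAdj {d : ℕ} (x y : Fin d → ℤ) : Prop := (∑ i, |x i - y i|) = 1

/-- The set of the `2d` nearest neighbors of a lattice point. -/
def latNbrs {d : ℕ} (x : Fin d → ℤ) : Finset (Fin d → ℤ) :=
  Finset.image
    (fun js : Fin d × Bool => fun i => x i + (if i = js.1 then (if js.2 then 1 else -1) else 0))
    Finset.univ

/-- The discrete boundary of a finite set `E ⊂ ℤ^d`. -/
def latBd {d : ℕ} (E : Finset (Fin d → ℤ)) : Finset (Fin d → ℤ) := (E.biUnion latNbrs) \ E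

/-- The discrete closure `Ē = E ∪ ∂E`. -/
def latCl {d : ℕ} (E : Finset (Fin d → ℤ)) : Finset (Fin d → ℤ) := E ∪ latBd E

/-- Dot product of `p ∈ ℝ^d` with a lattice point. -/
def dotZ {d : ℕ} (p : Fin d → ℝ) (x : Fin d → ℤ) : ℝ := ∑ i, p i * (x i : ℝ)

/-- The subdifferential `∂u(x;E)`. -/
def subdiff {d : ℕ} (u : (Fin d → ℤ) → ℝ) (E : Finset (Fin d → ℤ)) (x : Fin d → ℤ) :
    Set (Fin d → ℝ) :=
  {p | ∀ y ∈ latCl E, u x - dotZ p x ≤ u y - dotZ p y}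

/-- The subdifferential `∂u(A;E) = ⋃_{x ∈ A} ∂u(x;E)`. -/
def subdiffU {d : ℕ} (u : (Fin d → ℤ) → ℝ) (A E : Finset (Fin d → ℤ)) : Set (Fin d → ℝ) :=
  ⋃ x ∈ A, subdiff u E x

/-- Euclidean distance between lattice points. -/
noncomputable def distZ {d : ℕ} (x y : Fin d → ℤ) : ℝ :=
  Real.sqrt (∑ i, ((x i - y i : ℤ) : ℝ) ^ 2)

/-- Trace of the diagonal environment matrix at `x`. -/
def trw {d : ℕ} (ω : (Fin d → ℤ) → Fin d → ℝ) (x : Fin d → ℤ) : ℝ := ∑ i, ω x i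

/-- The balanced discrete elliptic operator
`L_ω u(x) = ∑_i ω_i(x)/(2 tr ω(x)) · (u(x+e_i)+u(x-e_i)-2u(x))`. -/
noncomputable def Lop {d : ℕ} (ω : (Fin d → ℤ) → Fin d → ℝ) (u : (Fin d → ℤ) → ℝ)
    (x : Fin d → ℤ) : ℝ :=
  ∑ i, (ω x i / (2 * trw ω x)) * (u (x + Pi.single i 1) + u (x - Pi.single i 1) - 2 * u x)

/-- The triadic cube `Q_n = {x ∈ ℤ^d : |x|_∞ < 3^n/2}`. -/
noncomputable def Qcube (d n : ℕ) : Finset (Fin d → ℤ) :=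
  Finset.Icc (fun _ => -(((3 : ℤ) ^ n - 1) / 2)) (fun _ => ((3 : ℤ) ^ n - 1) / 2)

/-- The `m`-level triadic sub-cube of `Q_{m+n}` indexed by `z ∈ Q_n`: `3^m z + Q_m`. -/
noncomputable def subQ (d m : ℕ) (z : Fin d → ℤ) : Finset (Fin d → ℤ) :=
  (Qcube d m).image (fun x => fun i => (3 : ℤ) ^ m * z i + x i)

/-- `u` is a supersolution: `L_ω u ≤ s + ψ_ω - E_Q ψ` on `Q`. -/
def inSuper {d : ℕ} (ω : (Fin d → ℤ) → Fin d → ℝ) (ψ : (Fin d → ℤ) → ℝ) (Eψ s : ℝ)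
    (Q : Finset (Fin d → ℤ)) (u : (Fin d → ℤ) → ℝ) : Prop :=
  ∀ x ∈ Q, Lop ω u x ≤ s + ψ x - Eψ

/-- `μ(s;Q) = (#Q)⁻¹ sup_{u ∈ S(s;Q)} |∂u(Q)|`. -/
noncomputable def muQ {d : ℕ} (ω : (Fin d → ℤ) → Fin d → ℝ) (ψ : (Fin d → ℤ) → ℝ)
    (Eψ s : ℝ) (Q : Finset (Fin d → ℤ)) : ℝ≥0∞ :=
  (⨆ (u : (Fin d → ℤ) → ℝ) (_ : inSuper ω ψ Eψ s Q u), volume (subdiffU u Q Q)) /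
    (Q.card : ℝ≥0∞)


/-- `3^n` is odd. -/
lemma odd_pow3 (n : ℕ) : ∃ k : ℤ, (3:ℤ)^n = 2*k+1 := by
  have h3 : Odd ((3:ℤ)^n) := Odd.pow ⟨1, by ring⟩
  obtain ⟨k, hk⟩ := h3
  exact ⟨k, by omega⟩

lemma latCl_mono {d : ℕ} {A B : Finset (Fin d → ℤ)} (h : A ⊆ B) : latCl A ⊆ latCl B := by
  intro y hy
  simp only [latCl, latBd, Finset.mem_union, Finset.mem_sdiff, Finset.mem_biUnion] at hy ⊢
  rcases hy with hy | ⟨⟨x, hx, hxy⟩, -⟩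
  · exact Or.inl (h hy)
  · by_cases hyB : y ∈ B
    · exact Or.inl hyB
    · exact Or.inr ⟨⟨x, h hx, hxy⟩, hyB⟩

lemma mem_Qcube {d n : ℕ} {x : Fin d → ℤ} :
    x ∈ Qcube d n ↔ ∀ i, -(((3:ℤ)^n - 1)/2) ≤ x i ∧ x i ≤ ((3:ℤ)^n - 1)/2 := by
  simp only [Qcube, Finset.mem_Icc, Pi.le_def]
  constructor
  · rintro ⟨h1, h2⟩ i; exact ⟨h1 i, h2 i⟩
  · intro h; exact ⟨fun i => (h i).1, fun i => (h i).2⟩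

lemma coord_decomp (m n : ℕ) (x : ℤ)
    (h1 : -(((3:ℤ)^(m+n) - 1)/2) ≤ x) (h2 : x ≤ ((3:ℤ)^(m+n) - 1)/2) :
    ∃ z r : ℤ, (-(((3:ℤ)^n - 1)/2) ≤ z) ∧ (z ≤ ((3:ℤ)^n - 1)/2) ∧
      (-(((3:ℤ)^m - 1)/2) ≤ r) ∧ (r ≤ ((3:ℤ)^m - 1)/2) ∧
      x = (3:ℤ)^m * z + r := by
  obtain ⟨h, hh⟩ := odd_pow3 m
  obtain ⟨k, hk⟩ := odd_pow3 n
  have hh0 : 0 ≤ h := by have := pow_pos (by norm_num : (0:ℤ) < 3) m; omega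
  have hk0 : 0 ≤ k := by have := pow_pos (by norm_num : (0:ℤ) < 3) n; omega
  have e1 : ((3:ℤ)^m - 1)/2 = h := by rw [hh]; omega
  have e2 : ((3:ℤ)^n - 1)/2 = k := by rw [hk]; omega
  have e3 : ((3:ℤ)^(m+n) - 1)/2 = 2*(h*k)+h+k := by
    have hp : (3:ℤ)^(m+n) = 2*(2*(h*k)+h+k)+1 := by rw [pow_add, hh, hk]; ring
    obtain ⟨K, hKdef⟩ : ∃ K : ℤ, K = 2*(h*k)+h+k := ⟨_, rfl⟩
    rw [← hKdef] at hp ⊢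
    rw [hp]; omega
  rw [e3] at h1 h2
  set b : ℤ := 2*h+1 with hb
  have hb0 : 0 < b := by omega
  set z : ℤ := (x + h) / b with hzdef
  set ρ : ℤ := (x + h) % b with hρdef
  have hmod1 : 0 ≤ ρ := Int.emod_nonneg _ (by omega)
  have hmod2 : ρ < b := Int.emod_lt_of_pos _ hb0
  have hdm : b * z + ρ = x + h := Int.mul_ediv_add_emod _ _
  refine ⟨z, ρ - h, ?_, ?_, ?_, ?_, ?_⟩
  · rw [e2]
    have expand : b * (-(k+1)) = -(2*(h*k)) - 2*h - k - 1 := by rw [hb]; ring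
    have hz2 : b * (-(k+1)) < b * z := by linarith
    have hlt := lt_of_mul_lt_mul_left hz2 (le_of_lt hb0)
    omega
  · rw [e2]
    have expand : b * (k+1) = 2*(h*k) + 2*h + k + 1 := by rw [hb]; ring
    have hz1 : b * z < b * (k+1) := by linarith
    have hlt := lt_of_mul_lt_mul_left hz1 (le_of_lt hb0)
    omega
  · rw [e1]; omega
  · rw [e1]; omega
  · rw [hh]; linarith

lemma subQ_subset {d m n : ℕ} {z : Fin d → ℤ} (hz : z ∈ Qcube d n) :
    subQ d m z ⊆ Qcube d (m+n) := by
  intro y hy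
  obtain ⟨x, hx, rfl⟩ := Finset.mem_image.1 hy
  rw [mem_Qcube] at hx ⊢
  intro i
  have hxi := hx i
  have hzi := (mem_Qcube.1 hz) i
  obtain ⟨h, hh⟩ := odd_pow3 m
  obtain ⟨k, hk⟩ := odd_pow3 n
  have hh0 : 0 ≤ h := by have := pow_pos (by norm_num : (0:ℤ) < 3) m; omega
  have hk0 : 0 ≤ k := by have := pow_pos (by norm_num : (0:ℤ) < 3) n; omega
  have e1 : ((3:ℤ)^m - 1)/2 = h := by rw [hh]; omega
  have e2 : ((3:ℤ)^n - 1)/2 = k := by rw [hk]; omega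
  have e3 : ((3:ℤ)^(m+n) - 1)/2 = 2*(h*k)+h+k := by
    have hp : (3:ℤ)^(m+n) = 2*(2*(h*k)+h+k)+1 := by rw [pow_add, hh, hk]; ring
    obtain ⟨K, hKdef⟩ : ∃ K : ℤ, K = 2*(h*k)+h+k := ⟨_, rfl⟩
    rw [← hKdef] at hp ⊢
    rw [hp]; omega
  rw [e1] at hxi
  rw [e2] at hzi
  rw [e3, hh]
  constructor
  · nlinarith [hzi.1, hzi.2, hxi.1, hxi.2]
  · nlinarith [hzi.1, hzi.2, hxi.1, hxi.2]

lemma exists_subQ {d m n : ℕ} {x : Fin d → ℤ} (hx : x ∈ Qcube d (m+n)) :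
    ∃ z ∈ Qcube d n, x ∈ subQ d m z := by
  have H := fun i => coord_decomp m n (x i) ((mem_Qcube.1 hx i).1) ((mem_Qcube.1 hx i).2)
  choose z r hz1 hz2 hr1 hr2 hxi using H
  refine ⟨z, mem_Qcube.2 (fun i => ⟨hz1 i, hz2 i⟩), ?_⟩
  refine Finset.mem_image.2 ⟨r, mem_Qcube.2 (fun i => ⟨hr1 i, hr2 i⟩), ?_⟩
  funext i
  exact (hxi i).symm

lemma card_Qcube (d n : ℕ) : (Qcube d n).card = (3^n)^d := by
  rw [Qcube, Pi.card_Icc]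
  have key : ∀ i : Fin d, (Finset.Icc (-(((3:ℤ)^n - 1)/2)) (((3:ℤ)^n - 1)/2)).card = 3^n := by
    intro i
    rw [Int.card_Icc]
    obtain ⟨k, hk⟩ := odd_pow3 n
    have hk0 : 0 ≤ k := by have := pow_pos (by norm_num : (0:ℤ) < 3) n; omega
    have hval : ((3:ℤ)^n - 1)/2 + 1 - -(((3:ℤ)^n - 1)/2) = (3:ℤ)^n := by rw [hk]; omega
    rw [hval]
    have hc : ((3:ℕ)^n : ℤ) = (3:ℤ)^n := by push_cast; ring
    omega
  rw [Finset.prod_congr rfl (fun i _ => key i), Finset.prod_const, Finset.card_univ,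
    Fintype.card_fin]

lemma card_subQ (d m : ℕ) (z : Fin d → ℤ) : (subQ d m z).card = (Qcube d m).card := by
  apply Finset.card_image_of_injective
  intro a b hab
  funext i
  have := congrFun hab i
  simp only at this
  linarith

/-- Subadditivity across scales:
`μ(s;Q_{m+n}) ≤ (#Q_n)⁻¹ ∑_{z ∈ Q_n} μ(s; 3^m z + Q_m)`. -/
theorem mu_subadditive (d : ℕ) (hd : 0 < d)
    (ω : (Fin d → ℤ) → Fin d → ℝ) (hpos : ∀ x i, 0 < ω x i)
    (κ : ℝ) (hκ : 0 < κ) (hell : ∀ x i, κ ≤ ω x i / (2 * trw ω x))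
    (ψ : (Fin d → ℤ) → ℝ) (Eψ s : ℝ) (m n : ℕ) :
    muQ ω ψ Eψ s (Qcube d (m + n)) ≤
      (∑ z ∈ Qcube d n, muQ ω ψ Eψ s (subQ d m z)) / ((Qcube d n).card : ℝ≥0∞) := by
  classical
  have hsub : ∀ z ∈ Qcube d n, subQ d m z ⊆ Qcube d (m+n) := fun z hz => subQ_subset hz
  set S : Finset (Fin d → ℤ) → ℝ≥0∞ := fun Q =>
    ⨆ (u : (Fin d → ℤ) → ℝ) (_ : inSuper ω ψ Eψ s Q u), volume (subdiffU u Q Q) with hS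
  have key : S (Qcube d (m+n)) ≤ ∑ z ∈ Qcube d n, S (subQ d m z) := by
    refine iSup_le fun u => iSup_le fun hu => ?_
    have hincl : subdiffU u (Qcube d (m+n)) (Qcube d (m+n)) ⊆
        ⋃ z ∈ Qcube d n, subdiffU u (subQ d m z) (subQ d m z) := by
      intro p hp
      simp only [subdiffU, Set.mem_iUnion, exists_prop] at hp ⊢
      obtain ⟨x, hx, hpx⟩ := hp
      obtain ⟨z, hz, hxz⟩ := exists_subQ hx
      exact ⟨z, hz, x, hxz, fun y hy => hpx y (latCl_mono (hsub z hz) hy)⟩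
    calc volume (subdiffU u (Qcube d (m+n)) (Qcube d (m+n)))
        ≤ volume (⋃ z ∈ Qcube d n, subdiffU u (subQ d m z) (subQ d m z)) :=
          measure_mono hincl
      _ ≤ ∑ z ∈ Qcube d n, volume (subdiffU u (subQ d m z) (subQ d m z)) :=
          measure_biUnion_finset_le _ _
      _ ≤ ∑ z ∈ Qcube d n, S (subQ d m z) := by
          refine Finset.sum_le_sum fun z hz => ?_
          have hu' : inSuper ω ψ Eψ s (subQ d m z) u := fun x hx => hu x (hsub z hz hx)
          exact le_iSup₂ (f := fun v (_ : inSuper ω ψ Eψ s (subQ d m z) v) =>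
            volume (subdiffU v (subQ d m z) (subQ d m z))) u hu'
  have hcard : ((Qcube d (m+n)).card : ℝ≥0∞) =
      ((Qcube d m).card : ℝ≥0∞) * ((Qcube d n).card : ℝ≥0∞) := by
    rw [card_Qcube, card_Qcube, card_Qcube, pow_add, mul_pow]
    push_cast
    ring
  have hmu : ∀ z, muQ ω ψ Eψ s (subQ d m z) = S (subQ d m z) * (((Qcube d m).card : ℝ≥0∞))⁻¹ := by
    intro z
    rw [muQ, card_subQ, div_eq_mul_inv, hS]
  have main : muQ ω ψ Eψ s (Qcube d (m+n)) ≤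
      (∑ z ∈ Qcube d n, S (subQ d m z)) /
        (((Qcube d m).card : ℝ≥0∞) * ((Qcube d n).card : ℝ≥0∞)) := by
    rw [muQ, hcard]
    exact ENNReal.div_le_div key le_rfl
  refine main.trans (le_of_eq ?_)
  rw [div_eq_mul_inv, div_eq_mul_inv,
    ENNReal.mul_inv (Or.inr (ENNReal.natCast_ne_top _)) (Or.inl (ENNReal.natCast_ne_top _)),
    ← mul_assoc, Finset.sum_mul]
  congr 1
  exact Finset.sum_congr rfl fun z _ => (hmu z).symm
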